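/- Let h_n denote the n-th L²-normalized Hermite function, h_n(x) = (2^n n! √π)^{-1/2} (-1)^n e^{x²/2} (d/dx)^n e^{-x²}. Then there is an absolute constant C such that for all n ≥ 0 and all real x with |x| > 10√n, one has |h_n(x)| ≤ C e^{-x²/4}. -/

import Mathlib

open Finset in
lemma pow_div_fact_le_exp (t : ℝ) (ht : 0 ≤ t) (j : ℕ) :
    t ^ j / j.factorial ≤ Real.exp t := by
  calc t ^ j / j.factorial ≤ ∑ i ∈ range (j+1), t ^ i / i.factorial := by
        refine Finset.single_le_sum (f := fun i : ℕ => t ^ i / (i.factorial : ℝ))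
          (fun i _ => by positivity) (Finset.self_mem_range_succ j)
    _ ≤ Real.exp t := Real.sum_le_exp_of_nonneg ht _

lemma sqrt_pow' (a : ℝ) (ha : 0 ≤ a) (n : ℕ) : Real.sqrt (a ^ n) = Real.sqrt a ^ n := by
  have h : (Real.sqrt a ^ n) ^ 2 = a ^ n := by
    rw [← pow_mul, mul_comm, pow_mul, Real.sq_sqrt ha]
  rw [← h, Real.sqrt_sq (by positivity)]

lemma final_ineq (n : ℕ) (t : ℝ) (ht : 10 * Real.sqrt n < t) :
    Real.sqrt (2 ^ n) / Real.sqrt (n.factorial) *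
        ((n + 1) * (t ^ n * Real.exp (n / 2))) * Real.exp (-t ^ 2 / 2)
      ≤ 17 * Real.exp (-t ^ 2 / 4) := by
  have hsn : (0:ℝ) ≤ 10 * Real.sqrt n := by positivity
  have ht0 : 0 < t := lt_of_le_of_lt hsn ht
  have htn : (0:ℝ) < t ^ n := by positivity
  have hfac : (0:ℝ) < Real.sqrt (n.factorial) := by
    apply Real.sqrt_pos.2; exact_mod_cast n.factorial_pos
  have ht2 : 100 * (n:ℝ) < t ^ 2 := by
    have := pow_lt_pow_left₀ ht hsn (n := 2) (by norm_num)
    calc 100 * (n:ℝ) = (10 * Real.sqrt n) ^ 2 := by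
          rw [mul_pow, Real.sq_sqrt (Nat.cast_nonneg n)]; ring
      _ < t ^ 2 := this
  have b1 : t ^ (2 * n) * Real.exp (-t ^ 2 / 8) ≤ 8 ^ n * n.factorial := by
    have h := pow_div_fact_le_exp (t ^ 2 / 8) (by positivity) n
    have h' : (t ^ 2) ^ n ≤ 8 ^ n * n.factorial * Real.exp (t ^ 2 / 8) := by
      rw [div_pow, div_le_iff₀ (by positivity)] at h
      calc (t ^ 2) ^ n = (t ^ 2) ^ n / 8 ^ n * 8 ^ n := by field_simp
        _ ≤ Real.exp (t ^ 2 / 8) * (n.factorial : ℝ) * 8 ^ n := by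
            apply mul_le_mul_of_nonneg_right h (by positivity)
        _ = 8 ^ n * n.factorial * Real.exp (t ^ 2 / 8) := by ring
    calc t ^ (2 * n) * Real.exp (-t ^ 2 / 8)
        = (t ^ 2) ^ n * Real.exp (-t ^ 2 / 8) := by rw [pow_mul]
      _ ≤ (8 ^ n * n.factorial * Real.exp (t ^ 2 / 8)) * Real.exp (-t ^ 2 / 8) :=
          mul_le_mul_of_nonneg_right h' (Real.exp_nonneg _)
      _ = 8 ^ n * n.factorial * Real.exp (t ^ 2 / 8 + -t ^ 2 / 8) := by
          rw [Real.exp_add]; ring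
      _ = 8 ^ n * n.factorial := by
          rw [show t ^ 2 / 8 + -t ^ 2 / 8 = 0 by ring, Real.exp_zero, mul_one]
  have b2 : Real.exp (-t ^ 2 / 8) ≤ Real.exp (-(25/2) * n) := by
    apply Real.exp_le_exp.2; nlinarith
  have b3 : 10 ^ n * Real.sqrt (n.factorial) ≤ t ^ n := by
    have h1 : Real.sqrt (n.factorial) ≤ Real.sqrt n ^ n := by
      rw [← sqrt_pow' _ (Nat.cast_nonneg n)]
      apply Real.sqrt_le_sqrt
      exact_mod_cast n.factorial_le_pow
    calc 10 ^ n * Real.sqrt (n.factorial) ≤ 10 ^ n * Real.sqrt n ^ n :=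
          mul_le_mul_of_nonneg_left h1 (by positivity)
      _ = (10 * Real.sqrt n) ^ n := by rw [mul_pow]
      _ ≤ t ^ n := pow_le_pow_left₀ hsn ht.le n
  have h12 : (4096:ℝ) ≤ Real.exp 12 := by
    have h2 : (2:ℝ) ^ (12:ℕ) ≤ Real.exp 1 ^ (12:ℕ) :=
      pow_le_pow_left₀ (by norm_num) (by linarith [Real.exp_one_gt_d9]) 12
    calc (4096:ℝ) = 2 ^ (12:ℕ) := by norm_num
      _ ≤ Real.exp 1 ^ (12:ℕ) := h2
      _ = Real.exp 12 := by rw [← Real.exp_nat_mul]; norm_num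
  have bexp : Real.exp (-12) ≤ 1 / 4096 := by
    calc Real.exp (-12) = 1 / Real.exp 12 := by rw [Real.exp_neg, one_div]
      _ ≤ 1 / 4096 := one_div_le_one_div_of_le (by norm_num) h12
  have bn1 : ((n:ℝ) + 1) ≤ 2 ^ n := by exact_mod_cast Nat.lt_two_pow_self (n := n)
  have hs2 : Real.sqrt ((2:ℝ) ^ n) ≤ 2 ^ n := by
    calc Real.sqrt ((2:ℝ) ^ n) ≤ Real.sqrt ((4:ℝ) ^ n) := by
          apply Real.sqrt_le_sqrt
          exact pow_le_pow_left₀ (by norm_num) (by norm_num) n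
      _ = 2 ^ n := by
          rw [show ((4:ℝ)) ^ n = ((2:ℝ) ^ n) ^ 2 by
            rw [← pow_mul, show (4:ℝ) = 2 ^ 2 by norm_num, ← pow_mul]; ring_nf]
          exact Real.sqrt_sq (by positivity)
  have hexpn : Real.exp ((n:ℝ) / 2) * Real.exp (-(25/2) * n) = Real.exp (-12 * n) := by
    rw [← Real.exp_add]; congr 1; ring
  have hexp12 : Real.exp ((-12 : ℝ) * n) ≤ (1/4096 : ℝ) ^ n := by
    rw [show (-12:ℝ) * n = n * (-12) by ring, Real.exp_nat_mul]
    exact pow_le_pow_left₀ (Real.exp_nonneg _) bexp n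
  have h10 : (1:ℝ) ≤ 17 * 10 ^ n := by
    have : (1:ℝ) ≤ 10 ^ n := one_le_pow₀ (by norm_num)
    linarith
  have hself : Real.sqrt (n.factorial) * Real.sqrt (n.factorial) = (n.factorial : ℝ) :=
    Real.mul_self_sqrt (Nat.cast_nonneg _)
  have coreT : Real.sqrt (2 ^ n) * ((n + 1) * (t ^ n * Real.exp (n / 2))) *
      (Real.exp (-t ^ 2 / 8) * Real.exp (-t ^ 2 / 8)) * t ^ n
        ≤ 17 * Real.sqrt (n.factorial) * t ^ n := by
    calc Real.sqrt (2 ^ n) * ((n + 1) * (t ^ n * Real.exp (n / 2))) *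
          (Real.exp (-t ^ 2 / 8) * Real.exp (-t ^ 2 / 8)) * t ^ n
        = (Real.sqrt (2 ^ n) * ((n:ℝ) + 1) * Real.exp (n / 2) * Real.exp (-t ^ 2 / 8)) *
            (t ^ (2 * n) * Real.exp (-t ^ 2 / 8)) := by
          rw [two_mul, pow_add]; ring
      _ ≤ (Real.sqrt (2 ^ n) * ((n:ℝ) + 1) * Real.exp (n / 2) * Real.exp (-t ^ 2 / 8)) *
            (8 ^ n * n.factorial) := by
          apply mul_le_mul_of_nonneg_left b1 (by positivity)
      _ ≤ ((2:ℝ) ^ n * (2 ^ n) * Real.exp (n / 2) * Real.exp (-(25/2) * n)) *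
            (8 ^ n * n.factorial) := by
          gcongr
      _ = ((2:ℝ) ^ n * 2 ^ n * 8 ^ n) * (Real.exp ((n:ℝ) / 2) * Real.exp (-(25/2) * n)) *
            n.factorial := by ring
      _ = ((2:ℝ) ^ n * 2 ^ n * 8 ^ n) * Real.exp ((-12 : ℝ) * n) * n.factorial := by
          rw [hexpn]
      _ ≤ ((2:ℝ) ^ n * 2 ^ n * 8 ^ n) * (1/4096 : ℝ) ^ n * n.factorial := by
          gcongr
      _ = ((1:ℝ)/128) ^ n * n.factorial := by
          rw [← mul_pow, ← mul_pow, ← mul_pow]; norm_num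
      _ ≤ 1 * n.factorial := by
          apply mul_le_mul_of_nonneg_right _ (Nat.cast_nonneg _)
          exact pow_le_one₀ (by norm_num) (by norm_num)
      _ = Real.sqrt (n.factorial) * Real.sqrt (n.factorial) := by rw [one_mul, hself]
      _ ≤ (17 * 10 ^ n) * (Real.sqrt (n.factorial) * Real.sqrt (n.factorial)) := by
          exact le_mul_of_one_le_left (by positivity) h10
      _ = 17 * (10 ^ n * Real.sqrt (n.factorial)) * Real.sqrt (n.factorial) := by ring
      _ ≤ 17 * t ^ n * Real.sqrt (n.factorial) := by gcongr
      _ = 17 * Real.sqrt (n.factorial) * t ^ n := by ring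
  have core := le_of_mul_le_mul_right coreT htn
  rw [div_mul_eq_mul_div, div_mul_eq_mul_div, div_le_iff₀ hfac]
  have hsplit : Real.exp (-t ^ 2 / 2) =
      Real.exp (-t ^ 2 / 4) * (Real.exp (-t ^ 2 / 8) * Real.exp (-t ^ 2 / 8)) := by
    rw [← Real.exp_add, ← Real.exp_add]; congr 1; ring
  rw [hsplit]
  calc Real.sqrt (2 ^ n) * ((n + 1) * (t ^ n * Real.exp (n / 2))) *
        (Real.exp (-t ^ 2 / 4) * (Real.exp (-t ^ 2 / 8) * Real.exp (-t ^ 2 / 8)))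
      = Real.sqrt (2 ^ n) * ((n + 1) * (t ^ n * Real.exp (n / 2))) *
          (Real.exp (-t ^ 2 / 8) * Real.exp (-t ^ 2 / 8)) * Real.exp (-t ^ 2 / 4) := by ring
    _ ≤ 17 * Real.sqrt (n.factorial) * Real.exp (-t ^ 2 / 4) :=
        mul_le_mul_of_nonneg_right core (Real.exp_nonneg _)
    _ = 17 * Real.exp (-t ^ 2 / 4) * Real.sqrt (n.factorial) := by ring


open Polynomial in
lemma iter_gauss (n : ℕ) (x : ℝ) :
    iteratedDeriv n (fun t : ℝ => Real.exp (-t ^ 2)) x =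
      (Real.sqrt 2) ^ n * ((-1 : ℝ) ^ n * aeval (Real.sqrt 2 * x) (hermite n) *
        Real.exp (-((Real.sqrt 2 * x) ^ 2 / 2))) := by
  have hfun : (fun t : ℝ => Real.exp (-t ^ 2)) =
      fun t : ℝ => Real.exp (-((Real.sqrt 2 * t) ^ 2 / 2)) := by
    funext t
    rw [mul_pow, Real.sq_sqrt (by norm_num : (2:ℝ) ≥ 0)]
    ring_nf
  have hcd : ContDiff ℝ n (fun y : ℝ => Real.exp (-(y ^ 2 / 2))) := by
    apply Real.contDiff_exp.comp
    exact (contDiff_id.pow 2).div_const 2 |>.neg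
  rw [hfun, iteratedDeriv_comp_const_mul hcd (Real.sqrt 2)]
  simp only [iteratedDeriv_eq_iterate]
  rw [Polynomial.deriv_gaussian_eq_hermite_mul_gaussian]

open Polynomial Finset in
lemma herm_term_bound (n k : ℕ) (hk : k ≤ n) (y : ℝ) (hy : (n : ℝ) ≤ y ^ 2) :
    |(((hermite n).coeff k : ℤ) : ℝ)| * |y| ^ k ≤ |y| ^ n * Real.exp (n / 2) := by
  have hyn : (0:ℝ) ≤ |y| := abs_nonneg y
  by_cases hpar : Even (n + k)
  · obtain ⟨j, hj⟩ : ∃ j, n - k = 2 * j := by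
      have hev : Even (n - k) := (Nat.even_sub hk).2 (Nat.even_add.1 hpar)
      rcases hev with ⟨j, hj⟩
      exact ⟨j, by omega⟩
    have hcoeff := coeff_hermite_of_even_add hpar
    have habs : |(((hermite n).coeff k : ℤ) : ℝ)| =
        ((Nat.doubleFactorial (n - k - 1) * n.choose k : ℕ) : ℝ) := by
      rw [hcoeff]
      rw [Int.cast_mul, Int.cast_mul, Int.cast_pow, Int.cast_neg, Int.cast_one,
        abs_mul, abs_mul, abs_pow, abs_neg, abs_one, one_pow, one_mul,
        Int.cast_natCast, Int.cast_natCast, Nat.abs_cast, Nat.abs_cast, Nat.cast_mul]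
    rw [habs]
    have hnat : Nat.doubleFactorial (n - k - 1) * n.choose k * (2 ^ j * j.factorial)
        ≤ n ^ (2 * j) := by
      have h1 : Nat.doubleFactorial (n - k - 1) * (2 ^ j * j.factorial)
          = (2 * j).factorial := by
        rcases Nat.eq_zero_or_pos j with rfl | hj0
        · simp [hj, Nat.doubleFactorial]
        · have hh : n - k - 1 = 2 * (j - 1) + 1 := by omega
          rw [hh]
          have h2 : (2 * (j-1) + 1 + 1) = 2 * j := by omega
          have h3 := Nat.factorial_eq_mul_doubleFactorial (2 * (j-1) + 1)
          rw [h2] at h3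
          rw [h3, Nat.doubleFactorial_two_mul]
          ring
      have h3 : n.choose k = n.choose (2 * j) := by
        rw [← Nat.choose_symm hk, hj]
      calc Nat.doubleFactorial (n - k - 1) * n.choose k * (2 ^ j * j.factorial)
          = (2 * j).factorial * n.choose (2 * j) := by rw [h3, ← h1]; ring
        _ = n.descFactorial (2 * j) := (Nat.descFactorial_eq_factorial_mul_choose n (2*j)).symm
        _ ≤ n ^ (2 * j) := Nat.descFactorial_le_pow n (2 * j)
    have hstep1 : ((Nat.doubleFactorial (n - k - 1) * n.choose k : ℕ) : ℝ) ≤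
        (n : ℝ) ^ (2 * j) / (2 ^ j * j.factorial) := by
      rw [le_div_iff₀ (by positivity)]
      exact_mod_cast hnat
    have hstep2 : (n : ℝ) ^ j * |y| ^ k ≤ |y| ^ n := by
      have h4 : (n:ℝ) ^ j ≤ |y| ^ (2 * j) := by
        calc (n:ℝ) ^ j ≤ (y ^ 2) ^ j := pow_le_pow_left₀ (Nat.cast_nonneg n) hy j
          _ = |y| ^ (2 * j) := by rw [← sq_abs, ← pow_mul]
      calc (n:ℝ) ^ j * |y| ^ k ≤ |y| ^ (2 * j) * |y| ^ k :=
            mul_le_mul_of_nonneg_right h4 (by positivity)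
        _ = |y| ^ n := by rw [← pow_add]; congr 1; omega
    calc ((Nat.doubleFactorial (n - k - 1) * n.choose k : ℕ) : ℝ) * |y| ^ k
        ≤ ((n : ℝ) ^ (2 * j) / (2 ^ j * j.factorial)) * |y| ^ k :=
          mul_le_mul_of_nonneg_right hstep1 (by positivity)
      _ = ((n : ℝ) ^ j / (2 ^ j * j.factorial)) * ((n:ℝ) ^ j * |y| ^ k) := by
          rw [two_mul, pow_add]; ring
      _ ≤ ((n : ℝ) ^ j / (2 ^ j * j.factorial)) * |y| ^ n :=
          mul_le_mul_of_nonneg_left hstep2 (by positivity)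
      _ = |y| ^ n * (((n:ℝ)/2) ^ j / j.factorial) := by
          rw [div_pow]; ring
      _ ≤ |y| ^ n * Real.exp (n / 2) := by
          refine mul_le_mul_of_nonneg_left ?_ (by positivity)
          exact pow_div_fact_le_exp _ (by positivity) j
  · rw [coeff_hermite_of_odd_add (Nat.not_even_iff_odd.1 hpar)]
    simp only [Int.cast_zero, abs_zero, zero_mul]
    positivity

open Polynomial Finset in
lemma herm_sum_bound (n : ℕ) (y : ℝ) (hy : (n : ℝ) ≤ y ^ 2) :
    |(aeval y (hermite n) : ℝ)| ≤ (n + 1) * (|y| ^ n * Real.exp (n / 2)) := by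
  rw [aeval_eq_sum_range (R := ℤ), natDegree_hermite]
  calc |∑ i ∈ range (n + 1), (hermite n).coeff i • y ^ i|
      ≤ ∑ i ∈ range (n + 1), |(hermite n).coeff i • y ^ i| :=
        Finset.abs_sum_le_sum_abs _ _
    _ ≤ ∑ _i ∈ range (n + 1), |y| ^ n * Real.exp (n / 2) := by
        refine Finset.sum_le_sum fun i hi => ?_
        have hi' : i ≤ n := Nat.lt_succ_iff.mp (Finset.mem_range.mp hi)
        have hz : |(hermite n).coeff i • y ^ i| =
            |(((hermite n).coeff i : ℤ) : ℝ)| * |y| ^ i := by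
          rw [zsmul_eq_mul, abs_mul, abs_pow]
        rw [hz]
        exact herm_term_bound n i hi' y hy
    _ = (n + 1) * (|y| ^ n * Real.exp (n / 2)) := by
        rw [Finset.sum_const, Finset.card_range]
        simp [nsmul_eq_mul]

/-- The `n`-th L²-normalized Hermite function. -/
noncomputable def hermiteFn (n : ℕ) (x : ℝ) : ℝ :=
  ((2 : ℝ) ^ n * (n.factorial : ℝ) * Real.sqrt Real.pi) ^ (-(1/2 : ℝ)) * (-1) ^ n *
    Real.exp (x ^ 2 / 2) * iteratedDeriv n (fun t => Real.exp (-t ^ 2)) x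

open Polynomial in
/-- Gaussian decay of Hermite functions in the range |x| > 10√n. -/
theorem stmt4 : ∃ C : ℝ, ∀ (n : ℕ) (x : ℝ), |x| > 10 * Real.sqrt n →
    |hermiteFn n x| ≤ C * Real.exp (-x ^ 2 / 4) := by
  refine ⟨17, fun n x hx => ?_⟩
  have hb0 : (0:ℝ) < (2 : ℝ) ^ n * (n.factorial : ℝ) * Real.sqrt Real.pi := by
    have : 0 < Real.sqrt Real.pi := Real.sqrt_pos.2 Real.pi_pos
    positivity
  set A : ℝ := ((2 : ℝ) ^ n * (n.factorial : ℝ) * Real.sqrt Real.pi) ^ (-(1/2 : ℝ)) with hA_def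
  have hA0 : 0 ≤ A := Real.rpow_nonneg hb0.le _
  set y : ℝ := Real.sqrt 2 * x with hy_def
  set E : ℝ := aeval y (hermite n) with hE_def
  have harg : -((Real.sqrt 2 * x) ^ 2 / 2) = -x ^ 2 := by
    rw [mul_pow, Real.sq_sqrt (by norm_num : (0:ℝ) ≤ 2)]; ring
  have hneg : ((-1:ℝ) ^ n) * ((-1:ℝ) ^ n) = 1 := by
    rw [← pow_add, ← two_mul, pow_mul]; norm_num
  have hexp : Real.exp (x ^ 2 / 2) * Real.exp (-x ^ 2) = Real.exp (-x ^ 2 / 2) := by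
    rw [← Real.exp_add]; congr 1; ring
  have heq : hermiteFn n x = A * ((Real.sqrt 2) ^ n * (E * Real.exp (-x ^ 2 / 2))) := by
    unfold hermiteFn
    rw [iter_gauss, harg, ← hA_def, ← hy_def, ← hE_def]
    calc A * (-1) ^ n * Real.exp (x ^ 2 / 2) *
          ((Real.sqrt 2) ^ n * ((-1 : ℝ) ^ n * E * Real.exp (-x ^ 2)))
        = A * ((Real.sqrt 2) ^ n * E) * (((-1:ℝ) ^ n) * ((-1:ℝ) ^ n)) *
            (Real.exp (x ^ 2 / 2) * Real.exp (-x ^ 2)) := by ring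
      _ = A * ((Real.sqrt 2) ^ n * (E * Real.exp (-x ^ 2 / 2))) := by
          rw [hneg, hexp]; ring
  have habs : |hermiteFn n x| = A * ((Real.sqrt 2) ^ n * (|E| * Real.exp (-x ^ 2 / 2))) := by
    rw [heq, abs_mul, abs_mul, abs_mul, abs_of_nonneg hA0,
      abs_of_nonneg (pow_nonneg (Real.sqrt_nonneg 2) n), Real.abs_exp]
  -- bound on A
  have hfacpos : (0:ℝ) < Real.sqrt ((2:ℝ) ^ n * (n.factorial : ℝ)) := by
    have : (0:ℝ) < (2:ℝ) ^ n * (n.factorial : ℝ) := by positivity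
    exact Real.sqrt_pos.2 this
  have hA_le : A ≤ 1 / Real.sqrt ((2:ℝ) ^ n * (n.factorial : ℝ)) := by
    have hpi1 : (1:ℝ) ≤ Real.sqrt Real.pi := by
      rw [show (1:ℝ) = Real.sqrt 1 by rw [Real.sqrt_one]]
      exact Real.sqrt_le_sqrt (by linarith [Real.pi_gt_three])
    have hbase : (2:ℝ) ^ n * (n.factorial : ℝ) ≤
        (2 : ℝ) ^ n * (n.factorial : ℝ) * Real.sqrt Real.pi := by
      calc (2:ℝ) ^ n * (n.factorial : ℝ) = (2:ℝ) ^ n * (n.factorial : ℝ) * 1 := by ring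
        _ ≤ (2 : ℝ) ^ n * (n.factorial : ℝ) * Real.sqrt Real.pi := by
            have hf : (0:ℝ) ≤ (n.factorial : ℝ) := Nat.cast_nonneg _
            have h2 : (0:ℝ) ≤ (2:ℝ) ^ n := by positivity
            nlinarith
    have : A = 1 / Real.sqrt ((2 : ℝ) ^ n * (n.factorial : ℝ) * Real.sqrt Real.pi) := by
      have gen : ∀ b : ℝ, 0 ≤ b → b ^ (-(1/2 : ℝ)) = 1 / Real.sqrt b := by
        intro b hb
        rw [Real.rpow_neg hb, Real.sqrt_eq_rpow]
        exact (one_div _).symm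
      rw [hA_def, gen _ hb0.le]
    rw [this]
    exact one_div_le_one_div_of_le hfacpos (Real.sqrt_le_sqrt hbase)
  -- bound on E
  have hxsq : 100 * (n:ℝ) < x ^ 2 := by
    have h1 : (10 * Real.sqrt n) ^ 2 < |x| ^ 2 :=
      pow_lt_pow_left₀ hx (by positivity) (by norm_num)
    rw [sq_abs] at h1
    calc 100 * (n:ℝ) = (10 * Real.sqrt n) ^ 2 := by
          rw [mul_pow, Real.sq_sqrt (Nat.cast_nonneg n)]; ring
      _ < x ^ 2 := h1
  have hy2 : (n : ℝ) ≤ y ^ 2 := by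
    have : y ^ 2 = 2 * x ^ 2 := by
      rw [hy_def, mul_pow, Real.sq_sqrt (by norm_num : (0:ℝ) ≤ 2)]
    nlinarith [Nat.cast_nonneg (α := ℝ) n, sq_nonneg x]
  have hE_le : |E| ≤ (n + 1) * (|y| ^ n * Real.exp (n / 2)) := herm_sum_bound n y hy2
  -- helper equalities
  have e1 : |y| ^ n = Real.sqrt 2 ^ n * |x| ^ n := by
    rw [hy_def, abs_mul, mul_pow, abs_of_nonneg (Real.sqrt_nonneg 2)]
  have e2 : Real.sqrt 2 ^ n * Real.sqrt 2 ^ n = 2 ^ n := by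
    rw [← mul_pow, Real.mul_self_sqrt (by norm_num : (0:ℝ) ≤ 2)]
  have e3 : Real.sqrt ((2:ℝ) ^ n * (n.factorial : ℝ)) =
      Real.sqrt ((2:ℝ) ^ n) * Real.sqrt (n.factorial : ℝ) :=
    Real.sqrt_mul (by positivity) _
  have e5 : Real.sqrt ((2:ℝ) ^ n) * Real.sqrt ((2:ℝ) ^ n) = (2:ℝ) ^ n :=
    Real.mul_self_sqrt (by positivity)
  have hs2pos : (0:ℝ) < Real.sqrt ((2:ℝ) ^ n) := Real.sqrt_pos.2 (by positivity)
  have hsfpos : (0:ℝ) < Real.sqrt ((n.factorial : ℝ)) := by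
    have : (0:ℝ) < (n.factorial : ℝ) := by exact_mod_cast n.factorial_pos
    exact Real.sqrt_pos.2 this
  have hxa : -x ^ 2 = -|x| ^ 2 := by rw [sq_abs]
  calc |hermiteFn n x|
      = A * ((Real.sqrt 2) ^ n * (|E| * Real.exp (-x ^ 2 / 2))) := habs
    _ ≤ (1 / Real.sqrt ((2:ℝ) ^ n * (n.factorial : ℝ))) *
          ((Real.sqrt 2) ^ n * (((n + 1) * (|y| ^ n * Real.exp (n / 2))) *
            Real.exp (-x ^ 2 / 2))) := by
        gcongr
    _ = Real.sqrt (2 ^ n) / Real.sqrt (n.factorial) *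
          ((n + 1) * (|x| ^ n * Real.exp (n / 2))) * Real.exp (-|x| ^ 2 / 2) := by
        rw [e1, ← hxa, e3, sqrt_pow' 2 (by norm_num)]
        field_simp
    _ ≤ 17 * Real.exp (-|x| ^ 2 / 4) := final_ineq n |x| hx
    _ = 17 * Real.exp (-x ^ 2 / 4) := by rw [hxa]
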